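/- The category FSet of finite sets (with all functions as morphisms) is not residually finite: for every finite category D and every functor F : FSet → D, F identifies the identity of {1,2,3} with the 3-cycle (1 2 3). -/

import Mathlib

open CategoryTheory

/-- A category is residually finite if any two distinct parallel morphisms
can be separated by a functor to a finite category. -/
def ResiduallyFiniteCat (C : Type*) [Category C] : Prop :=
  ∀ {X Y : C} (f g : X ⟶ Y), f ≠ g →
    ∃ (D : Type) (_ : SmallCategory D) (_ : FinCategory D) (F : C ⥤ D),
      F.map f ≠ F.map g

/-- Any functor to a finite category kills the `p`-cycle on `Fin p` for `p` a
prime larger than the total number of morphisms of the target. -/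
lemma aux_kill_cycle (D : Type) [SmallCategory D] [FinCategory D]
    (F : FintypeCat.{0} ⥤ D) (p : ℕ) (hp : p.Prime)
    (hlt : Fintype.card (Σ X Y : D, X ⟶ Y) < p) :
    F.map ((InducedCategory.homEquiv.trans TypeCat.homEquiv).symm (finRotate p : Fin p → Fin p) :
        FintypeCat.of (Fin p) ⟶ FintypeCat.of (Fin p))
      = F.map (𝟙 (FintypeCat.of (Fin p))) := by
  set E := FintypeCat.of (Fin p) with hE
  let φ : Equiv.Perm (Fin p) →* CategoryTheory.End (F.obj E) :=
  { toFun := fun σ => F.map ((InducedCategory.homEquiv.trans TypeCat.homEquiv).symm (σ : Fin p → Fin p) : E ⟶ E)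
    map_one' := by
      show F.map _ = (1 : CategoryTheory.End (F.obj E))
      rw [End.one_def, ← F.map_id]
      rfl
    map_mul' := fun σ τ => by
      show F.map _ = _
      rw [End.mul_def, ← F.map_comp]
      rfl }
  have hcyc : (finRotate p) ^ p = 1 := by
    have h2p := hp.two_le
    obtain ⟨n, rfl⟩ : ∃ n, p = n + 2 := ⟨p - 2, by omega⟩
    have h := (isCycle_finRotate (n := n)).orderOf
    rw [support_finRotate, Finset.card_univ, Fintype.card_fin] at h
    have hpw := pow_orderOf_eq_one (finRotate (n + 2))
    rwa [h] at hpw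
  have hap : (φ (finRotate p)) ^ p = 1 := by
    rw [← map_pow, hcyc, map_one]
  have ha1 : φ (finRotate p) = 1 := by
    have hdvd : orderOf (φ (finRotate p)) ∣ p := orderOf_dvd_of_pow_eq_one hap
    rcases hp.eq_one_or_self_of_dvd _ hdvd with h | h
    · exact orderOf_eq_one_iff.mp h
    · exfalso
      have : Fintype (CategoryTheory.End (F.obj E)) :=
        inferInstanceAs (Fintype (F.obj E ⟶ F.obj E))
      have hle : orderOf (φ (finRotate p)) ≤ Fintype.card (CategoryTheory.End (F.obj E)) :=
        orderOf_le_card_univ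
      have hinj : Function.Injective
          (fun (e : CategoryTheory.End (F.obj E)) =>
            (⟨F.obj E, F.obj E, e⟩ : Σ X Y : D, X ⟶ Y)) := by
        intro e₁ e₂ hee
        simpa using hee
      have hcard := Fintype.card_le_of_injective _ hinj
      omega
  have : F.map ((InducedCategory.homEquiv.trans TypeCat.homEquiv).symm (finRotate p : Fin p → Fin p) : E ⟶ E) = 𝟙 (F.obj E) := by
    exact ha1
  rw [this, F.map_id]

/-- The category of finite sets is not residually finite: every functor to a
finite category identifies the identity of a 3-element set with a 3-cycle. -/
theorem fintypeCat_not_residuallyFinite :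
    (∀ (D : Type) (_ : SmallCategory D) (_ : FinCategory D)
        (F : FintypeCat.{0} ⥤ D),
      F.map (𝟙 (FintypeCat.of (Fin 3))) =
        F.map ((InducedCategory.homEquiv.trans TypeCat.homEquiv).symm (finRotate 3 : Fin 3 → Fin 3) :
          FintypeCat.of (Fin 3) ⟶ FintypeCat.of (Fin 3))) ∧
    ¬ ResiduallyFiniteCat FintypeCat.{0} := by
  have main : ∀ (D : Type) (_ : SmallCategory D) (_ : FinCategory D)
      (F : FintypeCat.{0} ⥤ D),
      F.map (𝟙 (FintypeCat.of (Fin 3))) =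
        F.map ((InducedCategory.homEquiv.trans TypeCat.homEquiv).symm (finRotate 3 : Fin 3 → Fin 3) :
          FintypeCat.of (Fin 3) ⟶ FintypeCat.of (Fin 3)) := by
    intro D _ _ F
    obtain ⟨p, hpB, hp⟩ :=
      Nat.exists_infinite_primes (max (Fintype.card (Σ X Y : D, X ⟶ Y) + 1) 5)
    have hB : Fintype.card (Σ X Y : D, X ⟶ Y) < p := by omega
    have hkill := aux_kill_cycle D F p hp hB
    obtain ⟨n, rfl⟩ : ∃ n, p = n + 5 := ⟨p - 5, by omega⟩
    let u : FintypeCat.of (Fin 3) ⟶ FintypeCat.of (Fin (n + 5)) :=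
      (InducedCategory.homEquiv.trans TypeCat.homEquiv).symm (fun (x : Fin 3) => (⟨x.val, by omega⟩ : Fin (n + 5)))
    let r : FintypeCat.of (Fin (n + 5)) ⟶ FintypeCat.of (Fin 3) :=
      (InducedCategory.homEquiv.trans TypeCat.homEquiv).symm (fun (y : Fin (n + 5)) => (⟨y.val % 3, Nat.mod_lt _ (by omega)⟩ : Fin 3))
    have h1 : u ≫ ((InducedCategory.homEquiv.trans TypeCat.homEquiv).symm (finRotate (n + 5) : Fin (n + 5) → Fin (n + 5)) :
          FintypeCat.of (Fin (n + 5)) ⟶ FintypeCat.of (Fin (n + 5))) ≫ r =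
        ((InducedCategory.homEquiv.trans TypeCat.homEquiv).symm (finRotate 3 : Fin 3 → Fin 3) :
          FintypeCat.of (Fin 3) ⟶ FintypeCat.of (Fin 3)) := by
      refine FintypeCat.hom_ext _ _ (fun x => ?_)
      show r (finRotate (n + 5) (u x)) = finRotate 3 x
      have hx : x.val < 3 := x.isLt
      apply Fin.ext
      show (finRotate (n + 5) ⟨x.val, by omega⟩).val % 3 = (finRotate 3 x).val
      simp only [finRotate_succ_apply, Fin.add_def, Fin.val_one, r, u,
        Nat.mod_eq_of_lt (show x.val + 1 < n + 5 by omega)]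
    have h2 : u ≫ 𝟙 (FintypeCat.of (Fin (n + 5))) ≫ r =
        𝟙 (FintypeCat.of (Fin 3)) := by
      refine FintypeCat.hom_ext _ _ (fun x => ?_)
      show r (u x) = x
      have hx : x.val < 3 := x.isLt
      apply Fin.ext
      show x.val % 3 = x.val
      omega
    calc F.map (𝟙 (FintypeCat.of (Fin 3)))
        = F.map (u ≫ 𝟙 (FintypeCat.of (Fin (n + 5))) ≫ r) := by rw [h2]
      _ = F.map u ≫ F.map (𝟙 (FintypeCat.of (Fin (n + 5)))) ≫ F.map r := by
          rw [F.map_comp, F.map_comp]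
      _ = F.map u ≫ F.map ((InducedCategory.homEquiv.trans TypeCat.homEquiv).symm (finRotate (n + 5) : Fin (n + 5) → Fin (n + 5)) :
            FintypeCat.of (Fin (n + 5)) ⟶ FintypeCat.of (Fin (n + 5))) ≫ F.map r := by
          rw [hkill]
      _ = F.map (u ≫ ((InducedCategory.homEquiv.trans TypeCat.homEquiv).symm (finRotate (n + 5) : Fin (n + 5) → Fin (n + 5)) :
            FintypeCat.of (Fin (n + 5)) ⟶ FintypeCat.of (Fin (n + 5))) ≫ r) := by
          rw [F.map_comp, F.map_comp]
      _ = F.map ((InducedCategory.homEquiv.trans TypeCat.homEquiv).symm (finRotate 3 : Fin 3 → Fin 3) :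
            FintypeCat.of (Fin 3) ⟶ FintypeCat.of (Fin 3)) := by rw [h1]
  refine ⟨main, fun hres => ?_⟩
  obtain ⟨D, _, _, F, hne⟩ := hres (𝟙 (FintypeCat.of (Fin 3)))
    ((InducedCategory.homEquiv.trans TypeCat.homEquiv).symm (finRotate 3 : Fin 3 → Fin 3) :
      FintypeCat.of (Fin 3) ⟶ FintypeCat.of (Fin 3))
    (by
      intro h
      have h0 := congrArg (fun f : FintypeCat.of (Fin 3) ⟶ FintypeCat.of (Fin 3) => f (0 : Fin 3)) h
      simp [FintypeCat.id_apply] at h0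
      exact Fin.zero_ne_one h0)
  exact hne (main D ‹_› ‹_› F)
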